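/- Let r ∈ [0, 1) and for each i ∈ ℕ define real numbers N_{i,t} by N_{i,0} = 0 and, for t ≥ 1, N_{i,t} = r N_{i,t-1} + 1/t if i < t and N_{i,t} = r N_{i,t-1} otherwise. Then for all integers 1 ≤ i < t one has N_{i,t} ≤ log(t/i), and for i = 0 and all t ≥ 1 one has N_{0,t} ≤ 1 + log t. -/

import Mathlib

private lemma igt_aux_one_div (n : ℕ) (hn : 1 ≤ n) :
    (1 : ℝ) / (n + 1) ≤ Real.log (n + 1) - Real.log n := by
  have hn0 : (0 : ℝ) < n := by exact_mod_cast hn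
  have hn1 : (0 : ℝ) < (n : ℝ) + 1 := by linarith
  have h := Real.log_le_sub_one_of_pos (x := (n : ℝ) / (n + 1)) (by positivity)
  rw [Real.log_div (ne_of_gt hn0) (ne_of_gt hn1)] at h
  have : (n : ℝ) / (n + 1) - 1 = -(1 / (n + 1)) := by field_simp; ring
  linarith [this ▸ h]

private lemma igt_aux_sum (i : ℕ) (hi : 1 ≤ i) :
    ∀ t : ℕ, i < t → ∑ s ∈ Finset.Ioc i t, (1 : ℝ) / s ≤ Real.log t - Real.log i := by
  intro t ht
  induction t, ht using Nat.le_induction with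
  | base =>
    rw [Finset.sum_Ioc_succ_top (le_refl i), Finset.Ioc_self, Finset.sum_empty, zero_add]
    have := igt_aux_one_div i hi
    push_cast
    linarith
  | succ t ht ih =>
    rw [Finset.sum_Ioc_succ_top (le_of_lt ht)]
    have h2 := igt_aux_one_div t (le_trans hi (le_of_lt ht))
    push_cast
    push_cast at ih h2
    linarith

theorem igt_noise_coeff_log_bound
    (r : ℝ) (hr0 : 0 ≤ r) (hr1 : r < 1)
    (N : ℕ → ℕ → ℝ)
    (hN0 : ∀ i, N i 0 = 0)
    (hN : ∀ i t : ℕ, 1 ≤ t → N i t =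
      if i < t then r * N i (t - 1) + 1 / (t : ℝ) else r * N i (t - 1)) :
    (∀ i t : ℕ, 1 ≤ i → i < t → N i t ≤ Real.log ((t : ℝ) / (i : ℝ))) ∧
    (∀ t : ℕ, 1 ≤ t → N 0 t ≤ 1 + Real.log (t : ℝ)) := by
  -- Main bound: N i t ≤ ∑_{s ∈ Ioc i t} 1/s
  have key : ∀ t i : ℕ, N i t ≤ ∑ s ∈ Finset.Ioc i t, (1 : ℝ) / s := by
    intro t
    induction t with
    | zero => intro i; simp [hN0]
    | succ t ih =>
      intro i
      have hsum_nonneg : (0 : ℝ) ≤ ∑ s ∈ Finset.Ioc i t, (1 : ℝ) / s :=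
        Finset.sum_nonneg (fun s _ => by positivity)
      have hrec := hN i (t + 1) (Nat.le_add_left 1 t)
      simp only [Nat.add_sub_cancel] at hrec
      by_cases h : i < t + 1
      · rw [hrec, if_pos h]
        rw [Finset.sum_Ioc_succ_top (Nat.lt_succ_iff.mp h)]
        have h1 : r * N i t ≤ ∑ s ∈ Finset.Ioc i t, (1 : ℝ) / s := by
          calc r * N i t ≤ r * (∑ s ∈ Finset.Ioc i t, (1 : ℝ) / s) := by
                by_cases hN' : 0 ≤ N i t
                · exact mul_le_mul_of_nonneg_left (ih i) hr0
                · nlinarith [ih i]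
            _ ≤ 1 * (∑ s ∈ Finset.Ioc i t, (1 : ℝ) / s) :=
                mul_le_mul_of_nonneg_right (le_of_lt hr1) hsum_nonneg
            _ = _ := one_mul _
        push_cast
        linarith
      · rw [hrec, if_neg h]
        have hle : t + 1 ≤ i := Nat.le_of_not_lt h
        have hempty : Finset.Ioc i t = ∅ := Finset.Ioc_eq_empty (by omega)
        have hempty' : Finset.Ioc i (t + 1) = ∅ := Finset.Ioc_eq_empty (by omega)
        have := ih i
        rw [hempty, Finset.sum_empty] at this
        rw [hempty', Finset.sum_empty]
        nlinarith
  constructor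
  · intro i t hi hit
    have h1 := key t i
    have h2 := igt_aux_sum i hi t hit
    have hi0 : (0 : ℝ) < i := by exact_mod_cast hi
    have ht0 : (0 : ℝ) < t := by exact_mod_cast (lt_trans (by omega : 0 < i) hit)
    rw [Real.log_div (ne_of_gt ht0) (ne_of_gt hi0)]
    linarith
  · intro t ht
    have h1 := key t 0
    rcases Nat.eq_or_lt_of_le ht with h | h
    · rw [← h] at h1 ⊢
      have : Finset.Ioc 0 1 = {1} := by decide
      rw [this, Finset.sum_singleton] at h1
      simp only [Nat.cast_one, Real.log_one]
      norm_num at h1 ⊢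
      linarith
    · have hsplit : Finset.Ioc 0 t = insert 1 (Finset.Ioc 1 t) := by
        ext x; simp only [Finset.mem_Ioc, Finset.mem_insert]; omega
      have h2 := igt_aux_sum 1 (le_refl 1) t h
      rw [Nat.cast_one, Real.log_one, sub_zero] at h2
      rw [hsplit, Finset.sum_insert (by simp)] at h1
      rw [Nat.cast_one, one_div_one] at h1
      linarith
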